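/- arXiv:2006.14278 — 2 statements merged into one kernel-verified Lean document; each statement's English description precedes it below -/
import Mathlib

section
/- Under the separability assumption, each non-anchor row of Σ = UΛUᵀ is a nonnegative linear combination of the anchor rows of Σ, with combination coefficients U_{ik}/U_{π(k),k}. -/
open Matrix

theorem nonanchor_rows_cone_combination
    (n r : ℕ) (U : Matrix (Fin n) (Fin r) ℝ) (Λ : Matrix (Fin r) (Fin r) ℝ)
    (p : ℝ) (hp : 0 < p)
    (hU_nonneg : ∀ i k, 0 ≤ U i k)
    (π : Fin r → Fin n)
    (hzero : ∀ k : Fin r, ∀ j : Fin r, j ≠ k → U (π k) j = 0)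
    (hval : ∀ k : Fin r, p ≤ U (π k) k)
    (hΛ_symm : Λ.IsSymm) (hΛ_pd : Λ.PosDef) (hΛ_nonneg : ∀ i j, 0 ≤ Λ i j)
    (S : Matrix (Fin n) (Fin n) ℝ) (hS : S = U * Λ * Uᵀ) :
    ∀ i : Fin n,
      (∀ k : Fin r, 0 ≤ U i k / U (π k) k) ∧
      S i = ∑ k : Fin r, (U i k / U (π k) k) • S (π k) := by
  intro i
  have hpos : ∀ k : Fin r, 0 < U (π k) k := fun k => lt_of_lt_of_le hp (hval k)
  refine ⟨fun k => div_nonneg (hU_nonneg i k) (hpos k).le, ?_⟩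
  funext j
  have hSrow : ∀ a : Fin n, S a j = ∑ k : Fin r, ∑ l : Fin r, U a k * Λ k l * U j l := by
    intro a
    simp [hS, Matrix.mul_apply, Matrix.transpose_apply, Finset.sum_mul]
    exact Finset.sum_comm
  have hanchor : ∀ k : Fin r, S (π k) j = U (π k) k * ∑ l : Fin r, Λ k l * U j l := by
    intro k
    rw [hSrow (π k)]
    rw [Finset.sum_eq_single k]
    · rw [Finset.mul_sum]; congr 1; ext l; ring
    · intro m _ hm
      simp [hzero k m hm]
    · simp
  have : (∑ k : Fin r, (U i k / U (π k) k) • S (π k)) j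
      = ∑ k : Fin r, (U i k / U (π k) k) * S (π k) j := by
    simp [Finset.sum_apply]
  rw [this, hSrow i]
  refine Finset.sum_congr rfl fun k _ => ?_
  rw [hanchor k]
  rw [Finset.mul_sum, Finset.mul_sum]
  refine Finset.sum_congr rfl fun l _ => ?_
  rw [div_mul_eq_mul_div, mul_left_comm, mul_div_cancel_left₀ _ (hpos k).ne']
  ring
end

section
/- If two nodes u and v have isomorphic r-balls (B(u,r) ≅ B(v,r) via an isomorphism sending u to v), then the distributions of anonymous walks of any length L ≤ r starting from u and from v are identical. -/
/-- The first position at which the vertex `w i` occurs in the walk `w`. -/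
def firstOcc {n : ℕ} {α : Type*} [DecidableEq α] (w : Fin n → α) (i : Fin n) : Fin n :=
  (Finset.univ.filter fun j => w j = w i).min' ⟨i, by simp⟩

/-- The anonymization of a walk. -/
def anon {n : ℕ} {α : Type*} [DecidableEq α] (w : Fin n → α) (i : Fin n) : ℕ :=
  ((Finset.univ.filter fun j => j < firstOcc w i).image w).card

/-- The probability that the uniform random walk of length `L` started at `v`
has anonymous walk `a`. -/
noncomputable def awProb {V : Type*} [Fintype V] [DecidableEq V]
    (G : SimpleGraph V) [DecidableRel G.Adj] (v : V) (L : ℕ)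
    (a : Fin (L + 1) → ℕ) : ℝ :=
  ∑ w : Fin (L + 1) → V,
    if w 0 = v ∧ (∀ i : Fin L, G.Adj (w i.castSucc) (w i.succ)) ∧ anon w = a then
      ∏ i : Fin L, ((G.degree (w i.castSucc) : ℝ))⁻¹
    else 0

/-- Along an adjacency walk started at `u`, each vertex is reachable from `u` and at
distance at most its index. -/
lemma walkA {V : Type*} (G : SimpleGraph V) {u : V} {L : ℕ} (w : Fin (L+1) → V)
    (h0 : w 0 = u) (hadj : ∀ i : Fin L, G.Adj (w i.castSucc) (w i.succ)) :
    ∀ k : Fin (L+1), G.Reachable u (w k) ∧ G.dist u (w k) ≤ k.val := by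
  suffices H : ∀ k (hk : k < L+1), G.Reachable u (w ⟨k, hk⟩) ∧ G.dist u (w ⟨k, hk⟩) ≤ k by
    intro k; exact H k.val k.isLt
  intro k
  induction k with
  | zero =>
    intro hk
    have h : w ⟨0, hk⟩ = u := h0
    rw [h]
    exact ⟨SimpleGraph.Reachable.refl u, by simp [SimpleGraph.dist_self]⟩
  | succ n ih =>
    intro hk
    have hn : n < L + 1 := by omega
    obtain ⟨hr, hd⟩ := ih hn
    have hnL : n < L := by omega
    have ha : G.Adj (w ⟨n, hn⟩) (w ⟨n+1, hk⟩) := hadj ⟨n, hnL⟩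
    refine ⟨hr.trans ha.reachable, ?_⟩
    obtain ⟨p, hp⟩ := hr.exists_walk_length_eq_dist
    have h1 := SimpleGraph.dist_le (p.concat ha)
    rw [SimpleGraph.Walk.length_concat, hp] at h1
    omega

lemma dist_succ {V : Type*} (G : SimpleGraph V) {u x y : V} (hr : G.Reachable u x)
    (h : G.Adj x y) : G.dist u y ≤ G.dist u x + 1 := by
  obtain ⟨p, hp⟩ := hr.exists_walk_length_eq_dist
  have h1 := SimpleGraph.dist_le (p.concat h)
  rwa [SimpleGraph.Walk.length_concat, hp] at h1

/-- Anonymization is invariant under post-composition with a map injective on the range. -/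
lemma anon_comp {n : ℕ} {α β : Type*} [DecidableEq α] [DecidableEq β]
    (w : Fin n → α) (f : α → β) (hf : Set.InjOn f (Set.range w)) :
    anon (f ∘ w) = anon w := by
  have key : ∀ j k : Fin n, f (w j) = f (w k) ↔ w j = w k := fun j k =>
    ⟨fun h => hf ⟨j, rfl⟩ ⟨k, rfl⟩ h, fun h => congrArg f h⟩
  funext i
  have hfo : firstOcc (f ∘ w) i = firstOcc w i := by
    unfold firstOcc
    congr 1
    ext j
    simp [Function.comp, key]
  unfold anon
  rw [hfo]
  have himg : (Finset.univ.filter fun j => j < firstOcc w i).image (f ∘ w)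
      = ((Finset.univ.filter fun j => j < firstOcc w i).image w).image f := by
    rw [Finset.image_image]
  rw [himg, Finset.card_image_of_injOn]
  apply hf.mono
  intro x hx
  simp only [Finset.coe_image, Set.mem_image] at hx
  obtain ⟨j, _, rfl⟩ := hx
  exact ⟨j, rfl⟩

/-- Degrees are preserved by an isomorphism of induced subgraphs, provided all
neighbors (on both sides) lie in the induced sets. -/
lemma degree_eq_of_iso {V : Type*} [Fintype V] [DecidableEq V]
    (G : SimpleGraph V) [DecidableRel G.Adj] (S T : Set V)
    (ψ : (SimpleGraph.induce S G) ≃g (SimpleGraph.induce T G))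
    (x : V) (hx : x ∈ S) (hN : ∀ y, G.Adj x y → y ∈ S)
    (hN' : ∀ z, G.Adj (ψ ⟨x, hx⟩).val z → z ∈ T) :
    G.degree x = G.degree ((ψ ⟨x, hx⟩).val) := by
  show (G.neighborFinset x).card = (G.neighborFinset (ψ ⟨x, hx⟩).val).card
  apply Finset.card_bij
    (fun y hy => (ψ ⟨y, hN y ((SimpleGraph.mem_neighborFinset G x y).mp hy)⟩).val)
  · intro y hy
    rw [SimpleGraph.mem_neighborFinset]
    have hadj : (SimpleGraph.induce S G).Adj ⟨x, hx⟩
        ⟨y, hN y ((SimpleGraph.mem_neighborFinset G x y).mp hy)⟩ :=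
      (SimpleGraph.mem_neighborFinset G x y).mp hy
    exact ψ.map_rel_iff.mpr hadj
  · intro y1 h1 y2 h2 heq
    have := ψ.toEquiv.injective (Subtype.ext heq)
    exact congrArg Subtype.val this
  · intro z hz
    have haz : G.Adj (ψ ⟨x, hx⟩).val z := (SimpleGraph.mem_neighborFinset _ _ _).mp hz
    have hzT : z ∈ T := hN' z haz
    have hadj2 : (SimpleGraph.induce T G).Adj (ψ ⟨x, hx⟩) (ψ (ψ.symm ⟨z, hzT⟩)) := by
      rw [ψ.apply_symm_apply]; exact haz
    have hadj3 : (SimpleGraph.induce S G).Adj ⟨x, hx⟩ (ψ.symm ⟨z, hzT⟩) :=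
      ψ.map_rel_iff.mp hadj2
    refine ⟨(ψ.symm ⟨z, hzT⟩).val, ?_, ?_⟩
    · rw [SimpleGraph.mem_neighborFinset]; exact hadj3
    · show (ψ ⟨(ψ.symm ⟨z, hzT⟩).val, _⟩).val = z
      rw [Subtype.coe_eta, ψ.apply_symm_apply]

/-- Mapping a good walk from `u` through the ball isomorphism yields a good walk from `v`,
with the same anonymization and the same degrees. -/
lemma mapWalk {V : Type*} [Fintype V] [DecidableEq V]
    (G : SimpleGraph V) [DecidableRel G.Adj]
    (u v : V) (r : ℕ) (hu : G.dist u u ≤ r) (hv : G.dist v v ≤ r)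
    (φ : (SimpleGraph.induce {w | G.dist u w ≤ r} G) ≃g
         (SimpleGraph.induce {w | G.dist v w ≤ r} G))
    (hφ : φ ⟨u, hu⟩ = ⟨v, hv⟩)
    (f : V → V) (hf : ∀ x (h : G.dist u x ≤ r), f x = (φ ⟨x, h⟩).val)
    (L : ℕ) (hL : L ≤ r) (w : Fin (L+1) → V)
    (h0 : w 0 = u) (hadj : ∀ i : Fin L, G.Adj (w i.castSucc) (w i.succ)) :
    ((f ∘ w) 0 = v) ∧ (∀ i : Fin L, G.Adj ((f ∘ w) i.castSucc) ((f ∘ w) i.succ)) ∧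
      anon (f ∘ w) = anon w ∧
      ∀ i : Fin L, G.degree (w i.castSucc) = G.degree ((f ∘ w) i.castSucc) := by
  have hall := walkA G w h0 hadj
  have hdist : ∀ k : Fin (L+1), G.dist u (w k) ≤ r := by
    intro k
    have h1 := (hall k).2
    have h2 : k.val ≤ L := Nat.lt_succ_iff.mp k.isLt
    omega
  have h0' : (f ∘ w) 0 = v := by
    show f (w 0) = v
    rw [h0, hf u hu, hφ]
  have hadj' : ∀ i : Fin L, G.Adj ((f ∘ w) i.castSucc) ((f ∘ w) i.succ) := by
    intro i
    show G.Adj (f (w i.castSucc)) (f (w i.succ))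
    rw [hf _ (hdist _), hf _ (hdist _)]
    have hadjS : (SimpleGraph.induce {w | G.dist u w ≤ r} G).Adj
        ⟨w i.castSucc, hdist _⟩ ⟨w i.succ, hdist _⟩ := hadj i
    exact φ.map_rel_iff.mpr hadjS
  have hall' := walkA G (f ∘ w) h0' hadj'
  refine ⟨h0', hadj', ?_, ?_⟩
  · apply anon_comp
    have hinjS : Set.InjOn f {x | G.dist u x ≤ r} := by
      intro x hx y hy hxy
      rw [hf x hx, hf y hy] at hxy
      have := φ.toEquiv.injective (Subtype.ext hxy)
      exact congrArg Subtype.val this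
    apply hinjS.mono
    intro x hx
    obtain ⟨k, rfl⟩ := hx
    exact hdist k
  · intro i
    have hic : G.dist u (w i.castSucc) ≤ i.val := by
      have := (hall i.castSucc).2; simpa using this
    have hiv : i.val < L := i.isLt
    have hN : ∀ y, G.Adj (w i.castSucc) y → y ∈ {w | G.dist u w ≤ r} := by
      intro y hy
      have := dist_succ G (hall i.castSucc).1 hy
      show G.dist u y ≤ r
      omega
    have hic' : G.dist v ((f ∘ w) i.castSucc) ≤ i.val := by
      have := (hall' i.castSucc).2; simpa using this
    have hN' : ∀ z, G.Adj (φ ⟨w i.castSucc, hdist _⟩).val z →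
        z ∈ {w | G.dist v w ≤ r} := by
      intro z hz
      have hfz : G.Adj ((f ∘ w) i.castSucc) z := by
        show G.Adj (f (w i.castSucc)) z
        rw [hf _ (hdist _)]; exact hz
      have := dist_succ G (hall' i.castSucc).1 hfz
      show G.dist v z ≤ r
      omega
    have hdeg := degree_eq_of_iso G _ _ φ (w i.castSucc) (hdist _) hN hN'
    show G.degree (w i.castSucc) = G.degree (f (w i.castSucc))
    rw [hf _ (hdist _)]
    exact hdeg

theorem isomorphic_balls_same_anonymous_walk_distribution
    {V : Type*} [Fintype V] [DecidableEq V]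
    (G : SimpleGraph V) [DecidableRel G.Adj]
    (u v : V) (r : ℕ)
    (hu : u ∈ {w | G.dist u w ≤ r}) (hv : v ∈ {w | G.dist v w ≤ r})
    (φ : (SimpleGraph.induce {w | G.dist u w ≤ r} G) ≃g
         (SimpleGraph.induce {w | G.dist v w ≤ r} G))
    (hφ : φ ⟨u, hu⟩ = ⟨v, hv⟩) :
    ∀ L : ℕ, L ≤ r → ∀ a : Fin (L + 1) → ℕ, awProb G u L a = awProb G v L a := by
  intro L hL a
  have hu' : G.dist u u ≤ r := hu
  have hv' : G.dist v v ≤ r := hv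
  classical
  set f : V → V := fun x => if h : G.dist u x ≤ r then (φ ⟨x, h⟩).val else v with hfdef
  set g : V → V := fun x => if h : G.dist v x ≤ r then (φ.symm ⟨x, h⟩).val else u with hgdef
  have hf : ∀ x (h : G.dist u x ≤ r), f x = (φ ⟨x, h⟩).val := fun x h => dif_pos h
  have hg : ∀ x (h : G.dist v x ≤ r), g x = (φ.symm ⟨x, h⟩).val := fun x h => dif_pos h
  have hφs : φ.symm ⟨v, hv'⟩ = ⟨u, hu'⟩ := by
    rw [← hφ]; exact φ.symm_apply_apply _
  have hgf : ∀ x, G.dist u x ≤ r → g (f x) = x := by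
    intro x hx
    rw [hf x hx, hg _ (φ ⟨x, hx⟩).2, Subtype.coe_eta, φ.symm_apply_apply]
  have hfg : ∀ x, G.dist v x ≤ r → f (g x) = x := by
    intro x hx
    rw [hg x hx, hf _ (φ.symm ⟨x, hx⟩).2, Subtype.coe_eta, φ.apply_symm_apply]
  unfold awProb
  rw [← Finset.sum_filter, ← Finset.sum_filter]
  apply Finset.sum_nbij' (i := fun w => f ∘ w) (j := fun w => g ∘ w)
  · intro w hw
    simp only [Finset.mem_filter, Finset.mem_univ, true_and] at hw ⊢
    obtain ⟨h0, hadj, hanon⟩ := hw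
    obtain ⟨h0', hadj', hanonEq, _⟩ := mapWalk G u v r hu' hv' φ hφ f hf L hL w h0 hadj
    exact ⟨h0', hadj', hanonEq.trans hanon⟩
  · intro w hw
    simp only [Finset.mem_filter, Finset.mem_univ, true_and] at hw ⊢
    obtain ⟨h0, hadj, hanon⟩ := hw
    obtain ⟨h0', hadj', hanonEq, _⟩ := mapWalk G v u r hv' hu' φ.symm hφs g hg L hL w h0 hadj
    exact ⟨h0', hadj', hanonEq.trans hanon⟩
  · intro w hw
    simp only [Finset.mem_filter, Finset.mem_univ, true_and] at hw
    obtain ⟨h0, hadj, _⟩ := hw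
    funext k
    show g (f (w k)) = w k
    apply hgf
    have h1 := (walkA G w h0 hadj k).2
    have h2 : k.val ≤ L := Nat.lt_succ_iff.mp k.isLt
    omega
  · intro w hw
    simp only [Finset.mem_filter, Finset.mem_univ, true_and] at hw
    obtain ⟨h0, hadj, _⟩ := hw
    funext k
    show f (g (w k)) = w k
    apply hfg
    have h1 := (walkA G w h0 hadj k).2
    have h2 : k.val ≤ L := Nat.lt_succ_iff.mp k.isLt
    omega
  · intro w hw
    simp only [Finset.mem_filter, Finset.mem_univ, true_and] at hw
    obtain ⟨h0, hadj, _⟩ := hw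
    obtain ⟨_, _, _, hdeg⟩ := mapWalk G u v r hu' hv' φ hφ f hf L hL w h0 hadj
    apply Finset.prod_congr rfl
    intro i _
    rw [hdeg i]
end
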